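/- Let {G_n} be an inverse system of countable abelian groups indexed by ℕ. Then lim¹ {G_n} is either trivial or uncountable. -/
import Mathlib


/-- The map `Δ : ∏ₙ Gₙ → ∏ₙ Gₙ`, `Δ((xₙ)) = (xₙ - fₙ(xₙ₊₁))`, whose cokernel is
the derived functor `lim¹` of the inverse system `(Gₙ, fₙ)`. -/
def lim1Delta (G : ℕ → Type*) [∀ n, AddCommGroup (G n)]
    (f : ∀ n, G (n + 1) →+ G n) : (∀ n, G n) →+ (∀ n, G n) :=
  AddMonoidHom.mk' (fun x n => x n - f n (x (n + 1))) (by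
    intro x y
    funext n
    simp only [Pi.add_apply, map_add]
    abel)

/-- `lim¹` of an inverse system of abelian groups indexed by `ℕ`:
the cokernel of `Δ`. -/
abbrev lim1 (G : ℕ → Type*) [∀ n, AddCommGroup (G n)]
    (f : ∀ n, G (n + 1) →+ G n) : Type _ :=
  (∀ n, G n) ⧸ (lim1Delta G f).range

section Aux
variable {G : ℕ → Type*} [∀ n, AddCommGroup (G n)] (f : ∀ n, G (n + 1) →+ G n)

def lim1Fc : ∀ m n, G m →+ G n
  | 0, 0 => AddMonoidHom.id _
  | 0, _ + 1 => 0
  | m + 1, n =>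
    if h : n = m + 1 then (by subst h; exact AddMonoidHom.id _) else (lim1Fc m n).comp (f m)

lemma lim1Fc_self (m : ℕ) : lim1Fc f m m = AddMonoidHom.id _ := by
  cases m with
  | zero => rfl
  | succ m => simp [lim1Fc]

lemma lim1Fc_succ {m n : ℕ} (h : n ≤ m) :
    lim1Fc f (m + 1) n = (lim1Fc f m n).comp (f m) := by
  rw [lim1Fc, dif_neg (by omega)]

lemma lim1Fc_step : ∀ {m n : ℕ}, n < m → lim1Fc f m n = (f n).comp (lim1Fc f m (n + 1))
  | m + 1, n, h => by
    rcases Nat.lt_or_ge n m with h' | h'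
    · rw [lim1Fc_succ f (le_of_lt h'), lim1Fc_succ f h', lim1Fc_step h']
      rfl
    · have : n = m := by omega
      subst this
      rw [lim1Fc_succ f le_rfl, lim1Fc_self, lim1Fc_self]
      rfl

lemma lim1Fc_range_succ_le {m n : ℕ} (h : n ≤ m) :
    (lim1Fc f (m + 1) n).range ≤ (lim1Fc f m n).range := by
  rw [lim1Fc_succ f h]
  rintro x ⟨y, rfl⟩
  exact ⟨f m y, rfl⟩

lemma lim1Fc_range_le {m m' n : ℕ} (h : n ≤ m) (h' : m ≤ m') :
    (lim1Fc f m' n).range ≤ (lim1Fc f m n).range := by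
  induction m', h' using Nat.le_induction with
  | base => exact le_rfl
  | succ k hk ih => exact le_trans (lim1Fc_range_succ_le f (le_trans h hk)) ih

lemma lim1_telescope {A : Type*} [AddCommGroup A] (v : ℕ → A) {a b : ℕ} (h : a ≤ b) :
    ∑ j ∈ Finset.Ico a b, (v j - v (j + 1)) = v a - v b := by
  induction b, h using Nat.le_induction with
  | base => simp
  | succ b hb ih => rw [Finset.sum_Ico_succ_top (by omega), ih]; abel

lemma lim1Delta_surjective_of_ML
    (hML : ∀ n, ∃ s, ∀ m, s ≤ m → (lim1Fc f m n).range = (lim1Fc f s n).range) :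
    Function.Surjective (lim1Delta G f) := by
  choose s hs using hML
  set M : ℕ → ℕ := fun n => Nat.rec (max (s 0) 1)
    (fun n Mn => max (max (s (n + 1)) (n + 2)) Mn) n with hM
  have hMs : ∀ n, s n ≤ M n := by rintro (_ | n) <;> simp [hM]
  have hMn : ∀ n, n + 1 ≤ M n := by
    rintro (_ | n) <;> simp [hM]
  have hMmono : ∀ n, M n ≤ M (n + 1) := fun n => by simp [hM]
  set A : ∀ n, AddSubgroup (G n) := fun n => (lim1Fc f (M n) n).range with hA
  have hrange : ∀ n j, M n ≤ j → (lim1Fc f j n).range = A n := by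
    intro n j hj
    rw [hA]
    dsimp only
    rw [hs n j (le_trans (hMs n) hj), hs n (M n) (hMs n)]
  intro y
  set x : ∀ n, G n := fun n => ∑ j ∈ Finset.Ico n (M n), lim1Fc f j n (y j) with hx
  set w : ∀ n, G n := fun n => y n - (lim1Delta G f x n) with hwdef
  have hw : ∀ n, w n ∈ A n := by
    intro n
    have h1 : f n (x (n + 1)) = ∑ j ∈ Finset.Ico (n + 1) (M (n + 1)), lim1Fc f j n (y j) := by
      rw [hx]
      dsimp only
      rw [map_sum]
      refine Finset.sum_congr rfl fun j hj => ?_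
      simp only [Finset.mem_Ico] at hj
      conv_rhs => rw [lim1Fc_step f (show n < j by omega)]
      rfl
    have h2 : x n = y n + ∑ j ∈ Finset.Ico (n + 1) (M n), lim1Fc f j n (y j) := by
      rw [hx]
      dsimp only
      rw [Finset.sum_eq_sum_Ico_succ_bot (by have := hMn n; omega), lim1Fc_self]
      rfl
    have h3 : ∑ j ∈ Finset.Ico (n + 1) (M (n + 1)), lim1Fc f j n (y j)
        = (∑ j ∈ Finset.Ico (n + 1) (M n), lim1Fc f j n (y j))
          + ∑ j ∈ Finset.Ico (M n) (M (n + 1)), lim1Fc f j n (y j) := by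
      rw [Finset.sum_Ico_consecutive _ (hMn n) (hMmono n)]
    have : w n = ∑ j ∈ Finset.Ico (M n) (M (n + 1)), lim1Fc f j n (y j) := by
      rw [hwdef]
      dsimp only
      rw [lim1Delta]
      dsimp [AddMonoidHom.mk']
      rw [h1, h3, h2]
      abel
    rw [this]
    refine AddSubgroup.sum_mem _ fun j hj => ?_
    rw [← hrange n j (by simp at hj; omega)]
    exact ⟨y j, rfl⟩
  have key : ∀ n, ∀ a ∈ A n, ∃ b, b ∈ A (n + 1) ∧ f n b = a := by
    intro n a ha
    set t := max (M n) (M (n + 1)) with ht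
    rw [← hrange n t (le_max_left _ _)] at ha
    obtain ⟨c, rfl⟩ := ha
    rw [lim1Fc_step f (lt_of_lt_of_le (hMn n) (le_max_left _ _))]
    refine ⟨lim1Fc f t (n + 1) c, ?_, rfl⟩
    rw [← hrange (n + 1) t (le_max_right _ _)]
    exact ⟨c, rfl⟩
  choose b hb hfb using key
  set X : ∀ n, {v : G n // v ∈ A n} := fun n => Nat.rec ⟨0, zero_mem _⟩
    (fun n p => ⟨b n (p.1 - w n) (sub_mem p.2 (hw n)), hb n _ _⟩) n with hX
  have hXstep : ∀ n, f n (X (n + 1)).1 = (X n).1 - w n := fun n => hfb n _ _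
  refine ⟨x + (fun n => (X n).1), ?_⟩
  funext n
  have : lim1Delta G f (x + fun n => (X n).1) n
      = lim1Delta G f x n + ((X n).1 - f n ((X (n + 1)).1)) := by
    simp [lim1Delta, AddMonoidHom.mk']
    abel
  rw [this, hXstep n]
  rw [hwdef]
  dsimp only
  abel

lemma lim1_not_countable_of_not_ML [∀ n, Countable (G n)] (n₀ : ℕ)
    (h : ∀ s, ∃ m, s ≤ m ∧ (lim1Fc f m n₀).range ≠ (lim1Fc f s n₀).range) :
    ¬ Countable (lim1 G f) := by
  intro hcount
  choose m' hm' hne using h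
  set msq : ℕ → ℕ := fun k => m'^[k] n₀ with hmsqdef
  have hmsucc : ∀ k, msq (k + 1) = m' (msq k) := fun k =>
    Function.iterate_succ_apply' m' k n₀
  have hge : ∀ k, n₀ ≤ msq k := by
    intro k
    induction k with
    | zero => exact le_rfl
    | succ k ih => rw [hmsucc]; exact le_trans ih (hm' _)
  have hlt : ∀ k, msq k < msq (k + 1) := by
    intro k
    rw [hmsucc]
    rcases Nat.lt_or_ge (msq k) (m' (msq k)) with h' | h'
    · exact h'
    · exfalso
      have : m' (msq k) = msq k := le_antisymm h' (hm' _)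
      exact hne (msq k) (by rw [this])
  have hmono : StrictMono msq := strictMono_nat_of_lt_succ hlt
  set R : ℕ → AddSubgroup (G n₀) := fun k => (lim1Fc f (msq k) n₀).range with hRdef
  have hRle : ∀ k, R (k + 1) ≤ R k :=
    fun k => lim1Fc_range_le f (hge k) (le_of_lt (hlt k))
  have hRlt : ∀ k, R (k + 1) < R k := by
    intro k
    refine lt_of_le_of_ne (hRle k) ?_
    rw [hRdef]
    dsimp only
    rw [hmsucc]
    exact hne (msq k)
  choose g hgmem hgnot using fun k => SetLike.exists_of_lt (hRlt k)
  -- the tower of quotients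
  set proj : ∀ k, (G n₀ ⧸ R (k + 1)) →+ (G n₀ ⧸ R k) := fun k =>
    QuotientAddGroup.map (R (k + 1)) (R k) (AddMonoidHom.id _)
      (fun x hx => hRle k hx) with hprojdef
  have hproj : ∀ k a, proj k (QuotientAddGroup.mk' _ a) = QuotientAddGroup.mk' _ a := by
    intro k a
    exact QuotientAddGroup.map_mk' _ _ _ _ a
  set Hgrp : AddSubgroup (∀ k, G n₀ ⧸ R k) :=
    { carrier := {c | ∀ k, proj k (c (k + 1)) = c k}
      zero_mem' := by intro k; simp
      add_mem' := by
        intro a b ha hb k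
        simp only [Pi.add_apply, map_add, ha k, hb k]
      neg_mem' := by
        intro a ha k
        simp only [Pi.neg_apply, map_neg, ha k] } with hHdef
  -- the partial-sum homomorphism into the tower
  set S : (∀ n, G n) → ℕ → G n₀ := fun y k =>
    ∑ j ∈ Finset.Ico n₀ (msq k), lim1Fc f j n₀ (y j) with hSdef
  set φ : (∀ n, G n) →+ (∀ k, G n₀ ⧸ R k) :=
    AddMonoidHom.mk' (fun y k => QuotientAddGroup.mk' (R k) (S y k)) (by
      intro a b
      funext k
      simp only [hSdef, Pi.add_apply, map_add, Finset.sum_add_distrib]) with hφdef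
  have hφapp : ∀ y k, φ y k = QuotientAddGroup.mk' (R k) (S y k) := fun y k => rfl
  have hSmem : ∀ y k, S y (k + 1) - S y k ∈ R k := by
    intro y k
    have : S y (k + 1) - S y k
        = ∑ j ∈ Finset.Ico (msq k) (msq (k + 1)), lim1Fc f j n₀ (y j) := by
      rw [hSdef]
      dsimp only
      rw [← Finset.sum_Ico_consecutive _ (hge k) (le_of_lt (hlt k))]
      abel
    rw [this]
    refine AddSubgroup.sum_mem _ fun j hj => ?_
    simp only [Finset.mem_Ico] at hj
    exact lim1Fc_range_le f (hge k) hj.1 ⟨y j, rfl⟩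
  have hφmem : ∀ y, φ y ∈ Hgrp := by
    intro y k
    rw [hφapp, hφapp, hproj]
    rw [QuotientAddGroup.mk'_eq_mk']
    exact ⟨-(S y (k + 1) - S y k), neg_mem (hSmem y k), by abel⟩
  -- `φ` of a boundary is diagonal
  set diag : G n₀ →+ (∀ k, G n₀ ⧸ R k) :=
    AddMonoidHom.mk' (fun a k => QuotientAddGroup.mk' (R k) a) (by
      intro a b; funext k; simp) with hdiagdef
  have hdiagmem : ∀ a, diag a ∈ Hgrp := by
    intro a k
    exact hproj k a
  have hφΔ : ∀ x, φ (lim1Delta G f x) = diag (x n₀) := by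
    intro x
    funext k
    rw [hφapp]
    have htel : S (lim1Delta G f x) k
        = x n₀ - lim1Fc f (msq k) n₀ (x (msq k)) := by
      rw [hSdef]
      dsimp only
      have hterm : ∀ j, n₀ ≤ j → lim1Fc f j n₀ (lim1Delta G f x j)
          = lim1Fc f j n₀ (x j) - lim1Fc f (j + 1) n₀ (x (j + 1)) := by
        intro j hj
        rw [lim1Fc_succ f hj]
        simp [lim1Delta, AddMonoidHom.mk', map_sub]
      rw [Finset.sum_congr rfl fun j hj => hterm j (Finset.mem_Ico.mp hj).1]
      rw [lim1_telescope (fun t => lim1Fc f t n₀ (x t)) (hge k)]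
      rw [lim1Fc_self]
      rfl
    rw [htel]
    show QuotientAddGroup.mk' (R k) _ = QuotientAddGroup.mk' (R k) (x n₀)
    rw [QuotientAddGroup.mk'_eq_mk']
    exact ⟨lim1Fc f (msq k) n₀ (x (msq k)), ⟨_, rfl⟩, by abel⟩
  -- surjectivity of φ modulo the diagonal
  have hsur : ∀ c, c ∈ Hgrp → ∃ y a, φ y = c - diag a := by
    intro c hc
    choose r hr using fun k => QuotientAddGroup.mk'_surjective (R k) (c k)
    have hrdiff : ∀ k, ∃ u : G (msq k), lim1Fc f (msq k) n₀ u = r (k + 1) - r k := by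
      intro k
      have h1 : QuotientAddGroup.mk' (R k) (r (k + 1)) = QuotientAddGroup.mk' (R k) (r k) := by
        rw [← hproj k (r (k + 1)), hr, hr]
        exact hc k
      rw [QuotientAddGroup.mk'_eq_mk'] at h1
      obtain ⟨z, hz, hz2⟩ := h1
      obtain ⟨u, hu⟩ := hz
      exact ⟨-u, by rw [map_neg, hu]; rw [← hz2]; abel⟩
    choose u hu using hrdiff
    have hv : ∀ j, ∃ v : G j, (∀ k, msq k = j → lim1Fc f j n₀ v = r (k + 1) - r k) ∧
        ((¬ ∃ k, msq k = j) → v = 0) := by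
      intro j
      by_cases hj : ∃ k, msq k = j
      · obtain ⟨k, rfl⟩ := hj
        refine ⟨u k, fun k' hk' => ?_, fun hn => (hn ⟨k, rfl⟩).elim⟩
        obtain rfl := hmono.injective hk'
        exact hu _
      · exact ⟨0, fun k hk => (hj ⟨k, hk⟩).elim, fun _ => rfl⟩
    choose y hy1 hy2 using hv
    refine ⟨y, r 0, ?_⟩
    funext K
    have hsum : S y K = r K - r 0 := by
      rw [hSdef]
      dsimp only
      have himg : Finset.image msq (Finset.range K) ⊆ Finset.Ico n₀ (msq K) := by
        intro j hj
        simp only [Finset.mem_image, Finset.mem_range] at hj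
        obtain ⟨k, hk, rfl⟩ := hj
        exact Finset.mem_Ico.mpr ⟨hge k, hmono hk⟩
      rw [← Finset.sum_subset himg ?_]
      · rw [Finset.sum_image fun a _ b _ hab => hmono.injective hab]
        rw [Finset.sum_congr rfl fun k _ => hy1 (msq k) k rfl]
        exact Finset.sum_range_sub r K
      · intro j hj hnj
        have : ¬ ∃ k, msq k = j := by
          rintro ⟨k, rfl⟩
          refine hnj (Finset.mem_image.mpr ⟨k, Finset.mem_range.mpr ?_, rfl⟩)
          have := (Finset.mem_Ico.mp hj).2
          exact hmono.lt_iff_lt.mp this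
        rw [hy2 j this, map_zero]
    show QuotientAddGroup.mk' (R K) (S y K) = c K - diag (r 0) K
    rw [hsum, ← hr K]
    show _ = _ - QuotientAddGroup.mk' (R K) (r 0)
    rw [← map_sub]
  -- a continuum of elements of the tower limit
  set Sb : (ℕ → Bool) → ℕ → G n₀ := fun ε k =>
    ∑ i ∈ Finset.range k, (if ε i then g i else 0) with hSbdef
  set cel : (ℕ → Bool) → ∀ k, G n₀ ⧸ R k := fun ε k =>
    QuotientAddGroup.mk' (R k) (Sb ε k) with hceldef
  have hSb : ∀ (η : ℕ → Bool) k, Sb η (k + 1) = Sb η k + (if η k then g k else 0) := by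
    intro η k
    rw [hSbdef]
    dsimp only
    rw [Finset.sum_range_succ]
  have hcelmem : ∀ ε, cel ε ∈ Hgrp := by
    intro ε k
    show proj k (QuotientAddGroup.mk' _ (Sb ε (k + 1))) = QuotientAddGroup.mk' _ (Sb ε k)
    rw [hproj, QuotientAddGroup.mk'_eq_mk']
    refine ⟨-(if ε k then g k else 0), neg_mem ?_, ?_⟩
    · split
      · exact hgmem k
      · exact zero_mem _
    · rw [hSb]
      abel
  have hcel_inj : Function.Injective cel := by
    intro ε ε' hee
    by_contra hne2
    have hex : ∃ k, ε k ≠ ε' k := Function.ne_iff.mp hne2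
    set k₀ := Nat.find hex with hk₀def
    have hk₀ : ε k₀ ≠ ε' k₀ := Nat.find_spec hex
    have hagree : ∀ i, i < k₀ → ε i = ε' i := fun i hi => not_not.mp (Nat.find_min hex hi)
    have h1 : QuotientAddGroup.mk' (R (k₀ + 1)) (Sb ε (k₀ + 1))
        = QuotientAddGroup.mk' (R (k₀ + 1)) (Sb ε' (k₀ + 1)) := congrFun hee (k₀ + 1)
    rw [QuotientAddGroup.mk'_eq_mk'] at h1
    obtain ⟨z, hz, hz2⟩ := h1
    have hSbeq : Sb ε k₀ = Sb ε' k₀ :=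
      Finset.sum_congr rfl fun i hi => by rw [hagree i (Finset.mem_range.mp hi)]
    have hzval : z = (if ε' k₀ then g k₀ else 0) - (if ε k₀ then g k₀ else 0) := by
      rw [hSb ε, hSb ε', hSbeq] at hz2
      have h3 : Sb ε' k₀ + ((if ε k₀ = true then g k₀ else 0) + z)
          = Sb ε' k₀ + (if ε' k₀ = true then g k₀ else 0) := by
        rw [← add_assoc]
        exact hz2
      have h4 := add_left_cancel h3
      rw [← h4]
      abel
    have hor : g k₀ ∈ R (k₀ + 1) ∨ -g k₀ ∈ R (k₀ + 1) := by
      rw [hzval] at hz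
      cases hε : ε k₀ <;> cases hε' : ε' k₀ <;> rw [hε, hε'] at hz hk₀
      · exact absurd rfl hk₀
      · left; simpa using hz
      · right; simpa using hz
      · exact absurd rfl hk₀
    rcases hor with hmem | hmem
    · exact hgnot k₀ hmem
    · exact hgnot k₀ (by simpa using neg_mem hmem)
  -- counting
  set φ' : (∀ n, G n) →+ Hgrp := φ.codRestrict Hgrp hφmem with hφ'def
  set diag' : G n₀ →+ Hgrp := diag.codRestrict Hgrp hdiagmem with hdiag'def
  set D : AddSubgroup Hgrp := diag'.range with hDdef
  set ψ0 : (∀ n, G n) →+ Hgrp ⧸ D := (QuotientAddGroup.mk' D).comp φ' with hψ0def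
  have hker : (lim1Delta G f).range ≤ ψ0.ker := by
    rintro p ⟨x, rfl⟩
    have h1 : φ' (lim1Delta G f x) = diag' (x n₀) := Subtype.ext (hφΔ x)
    show QuotientAddGroup.mk' D (φ' (lim1Delta G f x)) = 0
    rw [h1]
    exact (QuotientAddGroup.eq_zero_iff _).mpr ⟨x n₀, rfl⟩
  set ψ : lim1 G f →+ Hgrp ⧸ D :=
    QuotientAddGroup.lift _ ψ0 hker with hψdef
  have hψsur : Function.Surjective ψ := by
    intro d
    obtain ⟨ch, rfl⟩ := QuotientAddGroup.mk'_surjective D d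
    obtain ⟨y, a, hya⟩ := hsur ch.1 ch.2
    refine ⟨QuotientAddGroup.mk' _ y, ?_⟩
    have h1 : φ' y = ch - diag' a := Subtype.ext (by exact hya)
    show ψ0 y = QuotientAddGroup.mk' D ch
    show QuotientAddGroup.mk' D (φ' y) = QuotientAddGroup.mk' D ch
    rw [h1, map_sub]
    have : QuotientAddGroup.mk' D (diag' a) = 0 :=
      (QuotientAddGroup.eq_zero_iff _).mpr ⟨a, rfl⟩
    rw [this, sub_zero]
  haveI hcountQ : Countable (Hgrp ⧸ D) := hψsur.countable
  haveI hcountD : Countable D := (AddMonoidHom.rangeRestrict_surjective diag').countable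
  haveI hcountH : Countable Hgrp := by
    have hmem2 : ∀ x : Hgrp, x - ((x : Hgrp ⧸ D)).out ∈ D := by
      intro x
      have h0 : ((((x : Hgrp ⧸ D)).out : Hgrp) : Hgrp ⧸ D) = (x : Hgrp ⧸ D) :=
        QuotientAddGroup.out_eq' _
      rw [sub_eq_neg_add]
      exact QuotientAddGroup.eq.mp h0
    have hinj : Function.Injective (fun x : Hgrp =>
        (((x : Hgrp ⧸ D)), (⟨x - ((x : Hgrp ⧸ D)).out, hmem2 x⟩ : D))) := by
      intro x x' hxx
      simp only [Prod.mk.injEq, Subtype.mk.injEq] at hxx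
      obtain ⟨h1, h2⟩ := hxx
      rw [h1] at h2
      exact sub_left_injective h2
    exact hinj.countable
  have : Function.Injective (fun ε : ℕ → Bool => (⟨cel ε, hcelmem ε⟩ : Hgrp)) := by
    intro ε ε' hεε
    exact hcel_inj (congrArg Subtype.val hεε)
  haveI : Countable (ℕ → Bool) := this.countable
  obtain ⟨F, hF⟩ := exists_surjective_nat (ℕ → Bool)
  obtain ⟨n, hn⟩ := hF fun n => !(F n n)
  have := congrFun hn n
  simp at this

end Aux

/-- **Gray.**  lim¹ of an inverse system of countable abelian
groups indexed by ℕ is either trivial or uncountable. -/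
theorem lim1_subsingleton_or_uncountable (G : ℕ → Type*) [∀ n, AddCommGroup (G n)]
    [∀ n, Countable (G n)] (f : ∀ n, G (n + 1) →+ G n) :
    Subsingleton (lim1 G f) ∨ ¬ Countable (lim1 G f) := by
  by_cases hML : ∀ n, ∃ s, ∀ m, s ≤ m → (lim1Fc f m n).range = (lim1Fc f s n).range
  · left
    have hsurj := lim1Delta_surjective_of_ML f hML
    have hr : (lim1Delta G f).range = ⊤ := AddMonoidHom.range_eq_top_of_surjective _ hsurj
    unfold lim1
    rw [hr]
    exact QuotientAddGroup.subsingleton_quotient_top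
  · right
    push_neg at hML
    obtain ⟨n₀, hn₀⟩ := hML
    exact lim1_not_countable_of_not_ML f n₀ hn₀
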